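/- arXiv:2001.06756 — 4 statements merged into one kernel-verified Lean document; each statement's English description precedes it below -/
import Mathlib

section
/- Generalized Ostrogradsky theorem, no-stationary-point branch (Theorem 2, condition 3-a): Assume L₀, each C a, and v are differentiable and the momentum identity and constraint identity hold at every point of ℝⁿ × ℝⁿ. If there exists no point (q,p) satisfying both v(q,p) = 0 and, for every I, ∂₂ᴵL₀(v(q,p), q) + Σ_a F a (q,p) · ∂₂ᴵ(C a)(v(q,p), q) = 0, then the on-shell Hamiltonian H has no local minimum and no local maximum at any point of ℝⁿ × ℝⁿ. -/
open scoped BigOperators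

/-- Partial derivative of `f` with respect to the `I`-th coordinate of its first argument. -/
noncomputable def pd1 {n : ℕ} (f : (Fin n → ℝ) × (Fin n → ℝ) → ℝ) (I : Fin n)
    (x : (Fin n → ℝ) × (Fin n → ℝ)) : ℝ :=
  deriv (fun t => f (Function.update x.1 I t, x.2)) (x.1 I)

/-- Partial derivative of `f` with respect to the `I`-th coordinate of its second argument. -/
noncomputable def pd2 {n : ℕ} (f : (Fin n → ℝ) × (Fin n → ℝ) → ℝ) (I : Fin n)
    (x : (Fin n → ℝ) × (Fin n → ℝ)) : ℝ :=
  deriv (fun t => f (x.1, Function.update x.2 I t)) (x.2 I)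

variable {n : ℕ}

theorem pd1_eq' (f : (Fin n → ℝ) × (Fin n → ℝ) → ℝ) (hf : Differentiable ℝ f) (I : Fin n)
    (x : (Fin n → ℝ) × (Fin n → ℝ)) :
    pd1 f I x = fderiv ℝ f x ((Pi.single I 1 : Fin n → ℝ), (0 : Fin n → ℝ)) := by
  have hc : HasDerivAt (fun t : ℝ => ((Function.update x.1 I t, x.2) : (Fin n → ℝ) × (Fin n → ℝ)))
      ((Pi.single I 1 : Fin n → ℝ), (0 : Fin n → ℝ)) (x.1 I) :=
    (hasDerivAt_update x.1 I (x.1 I)).prodMk (hasDerivAt_const _ _)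
  have h1 : HasFDerivAt f (fderiv ℝ f x) ((Function.update x.1 I (x.1 I), x.2)) := by
    rw [show ((Function.update x.1 I (x.1 I), x.2) : (Fin n → ℝ) × (Fin n → ℝ)) = x by
      simp [Function.update_eq_self]]
    exact (hf x).hasFDerivAt
  exact (h1.comp_hasDerivAt (x.1 I) hc).deriv

theorem pd2_eq' (f : (Fin n → ℝ) × (Fin n → ℝ) → ℝ) (hf : Differentiable ℝ f) (I : Fin n)
    (x : (Fin n → ℝ) × (Fin n → ℝ)) :
    pd2 f I x = fderiv ℝ f x ((0 : Fin n → ℝ), (Pi.single I 1 : Fin n → ℝ)) := by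
  have hc : HasDerivAt (fun t : ℝ => ((x.1, Function.update x.2 I t) : (Fin n → ℝ) × (Fin n → ℝ)))
      ((0 : Fin n → ℝ), (Pi.single I 1 : Fin n → ℝ)) (x.2 I) :=
    (hasDerivAt_const _ _).prodMk (hasDerivAt_update x.2 I (x.2 I))
  have h1 : HasFDerivAt f (fderiv ℝ f x) ((x.1, Function.update x.2 I (x.2 I))) := by
    rw [show ((x.1, Function.update x.2 I (x.2 I)) : (Fin n → ℝ) × (Fin n → ℝ)) = x by
      simp [Function.update_eq_self]]
    exact (hf x).hasFDerivAt
  exact (h1.comp_hasDerivAt (x.2 I) hc).deriv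

theorem hdecomp' (w : (Fin n → ℝ) × (Fin n → ℝ)) :
    w = (∑ J, w.1 J • (((Pi.single J 1 : Fin n → ℝ), (0 : Fin n → ℝ)) : (Fin n → ℝ) × (Fin n → ℝ)))
      + ∑ J, w.2 J • (((0 : Fin n → ℝ), (Pi.single J 1 : Fin n → ℝ)) : (Fin n → ℝ) × (Fin n → ℝ)) := by
  refine Prod.ext ?_ ?_ <;> funext i <;>
    simp [Prod.fst_sum, Prod.snd_sum, Finset.sum_apply, Pi.single_apply]

theorem fderiv_apply_eq' (f : (Fin n → ℝ) × (Fin n → ℝ) → ℝ) (hf : Differentiable ℝ f)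
    (x w : (Fin n → ℝ) × (Fin n → ℝ)) :
    fderiv ℝ f x w = (∑ J, w.1 J * pd1 f J x) + ∑ J, w.2 J * pd2 f J x := by
  conv_lhs => rw [hdecomp' w]
  rw [map_add, map_sum, map_sum]
  refine congrArg₂ (· + ·) ?_ ?_ <;>
    refine Finset.sum_congr rfl fun J _ => ?_
  · rw [map_smul, smul_eq_mul, pd1_eq' f hf]
  · rw [map_smul, smul_eq_mul, pd2_eq' f hf]


/-- Generalized Ostrogradsky theorem, no-stationary-point branch (condition 3-a):
if the system admits no stationary configuration, the on-shell Hamiltonian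
has no local minimum and no local maximum anywhere. -/
theorem generalized_ostrogradsky_no_stationary
    {n m : ℕ}
    (L₀ : (Fin n → ℝ) × (Fin n → ℝ) → ℝ)
    (C : Fin m → ((Fin n → ℝ) × (Fin n → ℝ) → ℝ))
    (v : (Fin n → ℝ) × (Fin n → ℝ) → (Fin n → ℝ))
    (F : (Fin n → ℝ) × (Fin n → ℝ) → (Fin m → ℝ))
    (hL : Differentiable ℝ L₀)
    (hC : ∀ a, Differentiable ℝ (C a))
    (hv : Differentiable ℝ v)
    (hmom : ∀ z : (Fin n → ℝ) × (Fin n → ℝ), ∀ I : Fin n,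
      z.2 I = pd1 L₀ I (v z, z.1) + ∑ a, F z a * pd1 (C a) I (v z, z.1))
    (hcon : ∀ z : (Fin n → ℝ) × (Fin n → ℝ), ∀ a, C a (v z, z.1) = 0)
    (H : (Fin n → ℝ) × (Fin n → ℝ) → ℝ)
    (hH : ∀ z : (Fin n → ℝ) × (Fin n → ℝ), H z = (∑ I, v z I * z.2 I) - L₀ (v z, z.1))
    (hnostat : ¬ ∃ z : (Fin n → ℝ) × (Fin n → ℝ),
      v z = 0 ∧ ∀ I : Fin n,
        pd2 L₀ I (v z, z.1) + ∑ a, F z a * pd2 (C a) I (v z, z.1) = 0) :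
    ∀ z : (Fin n → ℝ) × (Fin n → ℝ), ¬ IsLocalMin H z ∧ ¬ IsLocalMax H z := by
  have hHf : H = fun z => (∑ I, v z I * z.2 I) - L₀ (v z, z.1) := funext hH
  subst hHf
  intro z₀
  -- curves
  have hcurve : ∀ w : (Fin n → ℝ) × (Fin n → ℝ),
      HasDerivAt (fun t : ℝ => z₀ + t • w) w 0 := by
    intro w
    simpa using ((hasDerivAt_id (0:ℝ)).smul_const w).const_add z₀
  have hvC : ∀ w : (Fin n → ℝ) × (Fin n → ℝ),
      HasDerivAt (fun t : ℝ => v (z₀ + t • w)) (fderiv ℝ v z₀ w) 0 := by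
    intro w
    have h1 : HasFDerivAt v (fderiv ℝ v z₀) (z₀ + (0:ℝ) • w) := by
      rw [show z₀ + (0:ℝ) • w = z₀ by simp]
      exact (hv z₀).hasFDerivAt
    exact h1.comp_hasDerivAt 0 (hcurve w)
  have hφ : ∀ w : (Fin n → ℝ) × (Fin n → ℝ),
      HasDerivAt (fun t : ℝ => ((v (z₀ + t • w), (z₀ + t • w).1) : (Fin n → ℝ) × (Fin n → ℝ)))
        (fderiv ℝ v z₀ w, w.1) 0 := by
    intro w
    refine (hvC w).prodMk ?_
    have : HasDerivAt (fun t : ℝ => z₀.1 + t • w.1) w.1 0 := by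
      simpa using ((hasDerivAt_id (0:ℝ)).smul_const w.1).const_add z₀.1
    simpa [Prod.fst_add] using this
  -- derivative of constraints along curves vanishes
  have hCder : ∀ (a : Fin m) (w : (Fin n → ℝ) × (Fin n → ℝ)),
      fderiv ℝ (C a) (v z₀, z₀.1) (fderiv ℝ v z₀ w, w.1) = 0 := by
    intro a w
    have h1 : HasFDerivAt (C a) (fderiv ℝ (C a) (v z₀, z₀.1))
        ((v (z₀ + (0:ℝ) • w), (z₀ + (0:ℝ) • w).1)) := by
      rw [show z₀ + (0:ℝ) • w = z₀ by simp]
      exact (hC a _).hasFDerivAt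
    have h2 := h1.comp_hasDerivAt 0 (hφ w)
    have h3 : ((C a) ∘ fun t : ℝ => ((v (z₀ + t • w), (z₀ + t • w).1)
        : (Fin n → ℝ) × (Fin n → ℝ))) = fun _ : ℝ => (0:ℝ) :=
      funext fun t => hcon _ a
    rw [h3] at h2
    exact h2.unique (hasDerivAt_const 0 0)
  -- derivative of H along curves
  have hH' : ∀ w : (Fin n → ℝ) × (Fin n → ℝ),
      HasDerivAt (fun t : ℝ =>
          (∑ I, v (z₀ + t • w) I * (z₀ + t • w).2 I) - L₀ (v (z₀ + t • w), (z₀ + t • w).1))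
        ((∑ I, (fderiv ℝ v z₀ w I * z₀.2 I + v z₀ I * w.2 I))
          - fderiv ℝ L₀ (v z₀, z₀.1) (fderiv ℝ v z₀ w, w.1)) 0 := by
    intro w
    refine HasDerivAt.sub ?_ ?_
    · refine HasDerivAt.fun_sum fun I _ => ?_
      have hp : HasDerivAt (fun t : ℝ => (z₀ + t • w).2 I) (w.2 I) 0 := by
        have : HasDerivAt (fun t : ℝ => z₀.2 I + t • w.2 I) (w.2 I) 0 := by
          simpa using ((hasDerivAt_id (0:ℝ)).smul_const (w.2 I)).const_add (z₀.2 I)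
        simpa [Prod.snd_add] using this
      have hvI : HasDerivAt (fun t : ℝ => v (z₀ + t • w) I) (fderiv ℝ v z₀ w I) 0 :=
        hasDerivAt_pi.1 (hvC w) I
      simpa using hvI.fun_mul hp
    · have h1 : HasFDerivAt L₀ (fderiv ℝ L₀ (v z₀, z₀.1))
          ((v (z₀ + (0:ℝ) • w), (z₀ + (0:ℝ) • w).1)) := by
        rw [show z₀ + (0:ℝ) • w = z₀ by simp]
        exact (hL _).hasFDerivAt
      exact h1.comp_hasDerivAt 0 (hφ w)
  -- key algebraic identity
  have key1 : ∀ u : Fin n → ℝ,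
      ∑ J, u J * z₀.2 J = (∑ J, u J * pd1 L₀ J (v z₀, z₀.1))
        + ∑ a, F z₀ a * ∑ J, u J * pd1 (C a) J (v z₀, z₀.1) := by
    intro u
    have h1 : ∀ J : Fin n, u J * z₀.2 J = u J * pd1 L₀ J (v z₀, z₀.1)
        + ∑ a, F z₀ a * (u J * pd1 (C a) J (v z₀, z₀.1)) := by
      intro J
      rw [hmom z₀ J, mul_add, Finset.mul_sum]
      congr 1
      exact Finset.sum_congr rfl fun a _ => by ring
    calc ∑ J, u J * z₀.2 J
        = ∑ J, (u J * pd1 L₀ J (v z₀, z₀.1)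
            + ∑ a, F z₀ a * (u J * pd1 (C a) J (v z₀, z₀.1))) :=
          Finset.sum_congr rfl fun J _ => h1 J
      _ = (∑ J, u J * pd1 L₀ J (v z₀, z₀.1))
            + ∑ J, ∑ a, F z₀ a * (u J * pd1 (C a) J (v z₀, z₀.1)) := by
          rw [Finset.sum_add_distrib]
      _ = (∑ J, u J * pd1 L₀ J (v z₀, z₀.1))
            + ∑ a, F z₀ a * ∑ J, u J * pd1 (C a) J (v z₀, z₀.1) := by
          rw [Finset.sum_comm]
          congr 1
          exact Finset.sum_congr rfl fun a _ => (Finset.mul_sum _ _ _).symm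
  -- constraint expansion
  have hCexp : ∀ (a : Fin m) (w : (Fin n → ℝ) × (Fin n → ℝ)),
      (∑ J, fderiv ℝ v z₀ w J * pd1 (C a) J (v z₀, z₀.1))
        + ∑ J, w.1 J * pd2 (C a) J (v z₀, z₀.1) = 0 := by
    intro a w
    have h := hCder a w
    rwa [fderiv_apply_eq' (C a) (hC a)] at h
  -- main contradiction
  have main : (∀ w : (Fin n → ℝ) × (Fin n → ℝ),
      (∑ I, (fderiv ℝ v z₀ w I * z₀.2 I + v z₀ I * w.2 I))
        - fderiv ℝ L₀ (v z₀, z₀.1) (fderiv ℝ v z₀ w, w.1) = 0) → False := by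
    intro h0
    simp only [fderiv_apply_eq' L₀ hL] at h0
    apply hnostat
    refine ⟨z₀, ?_, ?_⟩
    · funext I
      set w : (Fin n → ℝ) × (Fin n → ℝ) := ((0 : Fin n → ℝ), Pi.single I 1) with hw
      set u : Fin n → ℝ := fderiv ℝ v z₀ w with hu
      have hca : ∀ a, ∑ J, u J * pd1 (C a) J (v z₀, z₀.1) = 0 := by
        intro a
        have := hCexp a w
        simpa [hw] using this
      have hk := key1 u
      simp only [hca, mul_zero, Finset.sum_const_zero, add_zero] at hk
      have h2 := h0 w
      rw [Finset.sum_add_distrib] at h2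
      have hs : ∑ I', v z₀ I' * w.2 I' = v z₀ I := by
        simp [hw, Pi.single_apply]
      rw [hs] at h2
      have hz : ∑ J, w.1 J * pd2 L₀ J (v z₀, z₀.1) = 0 := by simp [hw]
      rw [hz] at h2
      simp only [Pi.zero_apply]
      linarith [hk, h2]
    · intro I
      set w : (Fin n → ℝ) × (Fin n → ℝ) := ((Pi.single I 1 : Fin n → ℝ), (0 : Fin n → ℝ)) with hw
      set u : Fin n → ℝ := fderiv ℝ v z₀ w with hu
      have hca : ∀ a, ∑ J, u J * pd1 (C a) J (v z₀, z₀.1) = - pd2 (C a) I (v z₀, z₀.1) := by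
        intro a
        have h := hCexp a w
        have hs : ∑ J, w.1 J * pd2 (C a) J (v z₀, z₀.1) = pd2 (C a) I (v z₀, z₀.1) := by
          simp [hw, Pi.single_apply]
        rw [hs] at h
        linarith
      have hk := key1 u
      simp only [hca, mul_neg] at hk
      have h2 := h0 w
      rw [Finset.sum_add_distrib] at h2
      have hs1 : ∑ I', v z₀ I' * w.2 I' = 0 := by simp [hw]
      have hs2 : ∑ J, w.1 J * pd2 L₀ J (v z₀, z₀.1) = pd2 L₀ I (v z₀, z₀.1) := by
        simp [hw, Pi.single_apply]
      rw [hs1, hs2] at h2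
      have hsum : ∑ a, F z₀ a * pd2 (C a) I (v z₀, z₀.1)
          = - ∑ a, -(F z₀ a * pd2 (C a) I (v z₀, z₀.1)) := by
        rw [Finset.sum_neg_distrib, neg_neg]
      linarith [hk, h2, hsum]
  constructor
  · intro hmin
    apply main
    intro w
    have hloc : IsLocalMin ((fun z => (∑ I, v z I * z.2 I) - L₀ (v z, z.1))
        ∘ fun t : ℝ => z₀ + t • w) 0 := by
      apply IsLocalMin.comp_continuous
      · show IsLocalMin _ (z₀ + (0:ℝ) • w)
        rw [show z₀ + (0:ℝ) • w = z₀ by simp]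
        exact hmin
      · exact (continuous_const.add (continuous_id.smul continuous_const)).continuousAt
    exact hloc.hasDerivAt_eq_zero (hH' w)
  · intro hmax
    apply main
    intro w
    have hloc : IsLocalMax ((fun z => (∑ I, v z I * z.2 I) - L₀ (v z, z.1))
        ∘ fun t : ℝ => z₀ + t • w) 0 := by
      apply IsLocalMax.comp_continuous
      · show IsLocalMax _ (z₀ + (0:ℝ) • w)
        rw [show z₀ + (0:ℝ) • w = z₀ by simp]
        exact hmax
      · exact (continuous_const.add (continuous_id.smul continuous_const)).continuousAt
    exact hloc.hasDerivAt_eq_zero (hH' w)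
end

section
/- First derivatives of the on-shell Hamiltonian: Assume L₀, each C a, and v are differentiable and the momentum identity and constraint identity hold at every point of ℝⁿ × ℝⁿ. Then the on-shell Hamiltonian H is differentiable and, for every (q,p) and every index I, the partial derivative of H with respect to p I equals v(q,p) I, and the partial derivative of H with respect to q I equals −∂₂ᴵL₀(v(q,p), q) − Σ_a F a (q,p) · ∂₂ᴵ(C a)(v(q,p), q). -/
open scoped BigOperators

section aux

variable {n : ℕ}

private lemma pd1_eq_fderiv (f : (Fin n → ℝ) × (Fin n → ℝ) → ℝ) (hf : Differentiable ℝ f)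
    (I : Fin n) (x : (Fin n → ℝ) × (Fin n → ℝ)) :
    pd1 f I x = fderiv ℝ f x (Pi.single I 1, (0 : Fin n → ℝ)) := by
  have hγ : HasDerivAt (fun t : ℝ => ((Function.update x.1 I t, x.2) :
      (Fin n → ℝ) × (Fin n → ℝ))) ((Pi.single I 1, 0)) (x.1 I) :=
    (hasDerivAt_update x.1 I (x.1 I)).prodMk (hasDerivAt_const _ _)
  have hfx : HasFDerivAt f (fderiv ℝ f x) ((Function.update x.1 I (x.1 I), x.2)) := by
    rw [Function.update_eq_self]
    exact (hf x).hasFDerivAt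
  exact (hfx.comp_hasDerivAt _ hγ).deriv

private lemma pd2_eq_fderiv (f : (Fin n → ℝ) × (Fin n → ℝ) → ℝ) (hf : Differentiable ℝ f)
    (I : Fin n) (x : (Fin n → ℝ) × (Fin n → ℝ)) :
    pd2 f I x = fderiv ℝ f x ((0 : Fin n → ℝ), Pi.single I 1) := by
  have hγ : HasDerivAt (fun t : ℝ => ((x.1, Function.update x.2 I t) :
      (Fin n → ℝ) × (Fin n → ℝ))) ((0, Pi.single I 1)) (x.2 I) :=
    (hasDerivAt_const _ _).prodMk (hasDerivAt_update x.2 I (x.2 I))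
  have hfx : HasFDerivAt f (fderiv ℝ f x) ((x.1, Function.update x.2 I (x.2 I))) := by
    rw [Function.update_eq_self]
    exact (hf x).hasFDerivAt
  exact (hfx.comp_hasDerivAt _ hγ).deriv

private lemma clm_fst_expand (L : ((Fin n → ℝ) × (Fin n → ℝ)) →L[ℝ] ℝ) (u : Fin n → ℝ) :
    L (u, 0) = ∑ J, u J * L (Pi.single J 1, (0 : Fin n → ℝ)) := by
  have h : ((u, 0) : (Fin n → ℝ) × (Fin n → ℝ)) =
      ∑ J, u J • ((Pi.single J 1, 0) : (Fin n → ℝ) × (Fin n → ℝ)) := by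
    refine Prod.ext ?_ ?_
    · simp only [Prod.fst_sum, Prod.smul_mk]
      funext K
      simp [Finset.sum_apply, Pi.single_apply, mul_ite, Finset.sum_ite_eq]
    · simp [Prod.snd_sum]
  rw [h, map_sum]
  simp only [map_smul, smul_eq_mul]

private lemma clm_split (L : ((Fin n → ℝ) × (Fin n → ℝ)) →L[ℝ] ℝ) (u w : Fin n → ℝ) :
    L (u, w) = L (u, 0) + L ((0 : Fin n → ℝ), w) := by
  have h : ((u, w) : (Fin n → ℝ) × (Fin n → ℝ)) = (u, 0) + (0, w) := by
    simp [Prod.mk_add_mk]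
  rw [h, map_add]

end aux

set_option maxHeartbeats 1000000 in
/-- First derivatives of the on-shell Hamiltonian: `∂H/∂p_I = v_I` and
`∂H/∂q_I = −∂L/∂q_I` evaluated on shell. -/
theorem onshell_hamiltonian_first_derivatives
    {n m : ℕ}
    (L₀ : (Fin n → ℝ) × (Fin n → ℝ) → ℝ)
    (C : Fin m → ((Fin n → ℝ) × (Fin n → ℝ) → ℝ))
    (v : (Fin n → ℝ) × (Fin n → ℝ) → (Fin n → ℝ))
    (F : (Fin n → ℝ) × (Fin n → ℝ) → (Fin m → ℝ))
    (hL : Differentiable ℝ L₀)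
    (hC : ∀ a, Differentiable ℝ (C a))
    (hv : Differentiable ℝ v)
    (hmom : ∀ z : (Fin n → ℝ) × (Fin n → ℝ), ∀ I : Fin n,
      z.2 I = pd1 L₀ I (v z, z.1) + ∑ a, F z a * pd1 (C a) I (v z, z.1))
    (hcon : ∀ z : (Fin n → ℝ) × (Fin n → ℝ), ∀ a, C a (v z, z.1) = 0)
    (H : (Fin n → ℝ) × (Fin n → ℝ) → ℝ)
    (hH : ∀ z : (Fin n → ℝ) × (Fin n → ℝ), H z = (∑ I, v z I * z.2 I) - L₀ (v z, z.1)) :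
    Differentiable ℝ H ∧
    ∀ z : (Fin n → ℝ) × (Fin n → ℝ), ∀ I : Fin n,
      pd2 H I z = v z I ∧
      pd1 H I z = -(pd2 L₀ I (v z, z.1)) - ∑ a, F z a * pd2 (C a) I (v z, z.1) := by
  have hHfun : H = fun z => (∑ I, v z I * z.2 I) - L₀ (v z, z.1) := funext hH
  subst hHfun
  have hvI : ∀ I : Fin n, Differentiable ℝ fun z : (Fin n → ℝ) × (Fin n → ℝ) => v z I :=
    differentiable_pi.mp hv
  have hpI : ∀ I : Fin n, Differentiable ℝ fun z : (Fin n → ℝ) × (Fin n → ℝ) => z.2 I :=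
    differentiable_pi.mp differentiable_snd
  have hφ : Differentiable ℝ fun z : (Fin n → ℝ) × (Fin n → ℝ) =>
      ((v z, z.1) : (Fin n → ℝ) × (Fin n → ℝ)) := hv.prodMk differentiable_fst
  have hdiff : Differentiable ℝ fun z : (Fin n → ℝ) × (Fin n → ℝ) =>
      (∑ I, v z I * z.2 I) - L₀ (v z, z.1) :=
    (Differentiable.fun_sum fun J _ => (hvI J).mul (hpI J)).sub (hL.comp hφ)
  refine ⟨hdiff, fun z I => ?_⟩
  -- derivative of the composed constraint is zero
  have hCkey : ∀ a, ∀ w : (Fin n → ℝ) × (Fin n → ℝ),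
      fderiv ℝ (C a) (v z, z.1) (fderiv ℝ v z w, w.1) = 0 := by
    intro a w
    have hφz : HasFDerivAt (fun z : (Fin n → ℝ) × (Fin n → ℝ) => ((v z, z.1)))
        ((fderiv ℝ v z).prod (ContinuousLinearMap.fst ℝ (Fin n → ℝ) (Fin n → ℝ))) z :=
      ((hv z).hasFDerivAt).prodMk hasFDerivAt_fst
    have hcomp : HasFDerivAt (fun z : (Fin n → ℝ) × (Fin n → ℝ) => C a (v z, z.1))
        ((fderiv ℝ (C a) (v z, z.1)).comp
          ((fderiv ℝ v z).prod (ContinuousLinearMap.fst ℝ (Fin n → ℝ) (Fin n → ℝ)))) z :=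
      ((hC a (v z, z.1)).hasFDerivAt).comp z hφz
    have hzero : (fun z : (Fin n → ℝ) × (Fin n → ℝ) => C a (v z, z.1)) =
        fun _ => (0 : ℝ) := funext fun z => hcon z a
    have hconst : HasFDerivAt (fun z : (Fin n → ℝ) × (Fin n → ℝ) => C a (v z, z.1))
        (0 : ((Fin n → ℝ) × (Fin n → ℝ)) →L[ℝ] ℝ) z := by
      rw [hzero]; exact hasFDerivAt_const 0 z
    have := hcomp.unique hconst
    calc fderiv ℝ (C a) (v z, z.1) (fderiv ℝ v z w, w.1)
        = ((fderiv ℝ (C a) (v z, z.1)).comp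
            ((fderiv ℝ v z).prod (ContinuousLinearMap.fst ℝ (Fin n → ℝ) (Fin n → ℝ)))) w := by
          simp
      _ = 0 := by rw [this]; simp
  -- common abbreviations
  set DL := fderiv ℝ L₀ (v z, z.1) with hDL
  -- key algebraic identity: for any direction image u of the velocity map
  have hkey : ∀ u : Fin n → ℝ, ∑ J, u J * z.2 J
      = DL (u, 0) + ∑ a, F z a * fderiv ℝ (C a) (v z, z.1) (u, 0) := by
    intro u
    calc ∑ J, u J * z.2 J
        = ∑ J, u J * (DL (Pi.single J 1, 0) +
            ∑ a, F z a * fderiv ℝ (C a) (v z, z.1) (Pi.single J 1, 0)) := by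
          refine Finset.sum_congr rfl fun J _ => ?_
          rw [hmom z J, pd1_eq_fderiv L₀ hL]
          congr 2
          exact Finset.sum_congr rfl fun a _ => by rw [pd1_eq_fderiv (C a) (hC a)]
      _ = (∑ J, u J * DL (Pi.single J 1, 0)) +
            ∑ J, u J * ∑ a, F z a * fderiv ℝ (C a) (v z, z.1) (Pi.single J 1, 0) := by
          simp [mul_add, Finset.sum_add_distrib]
      _ = DL (u, 0) + ∑ a, F z a * fderiv ℝ (C a) (v z, z.1) (u, 0) := by
          congr 1
          · exact (clm_fst_expand DL u).symm
          · simp only [Finset.mul_sum]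
            rw [Finset.sum_comm]
            refine Finset.sum_congr rfl fun a _ => ?_
            rw [clm_fst_expand (fderiv ℝ (C a) (v z, z.1)) u, Finset.mul_sum]
            exact Finset.sum_congr rfl fun J _ => by ring
  constructor
  · -- ∂H/∂p_I = v_I
    set u := fderiv ℝ v z ((0 : Fin n → ℝ), Pi.single I 1) with hu
    have hγ : HasDerivAt (fun t : ℝ => ((z.1, Function.update z.2 I t) :
        (Fin n → ℝ) × (Fin n → ℝ))) ((0, Pi.single I 1)) (z.2 I) :=
      (hasDerivAt_const _ _).prodMk (hasDerivAt_update z.2 I (z.2 I))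
    have hvz : HasFDerivAt v (fderiv ℝ v z) (z.1, Function.update z.2 I (z.2 I)) := by
      rw [Function.update_eq_self]; exact (hv z).hasFDerivAt
    have hvc : HasDerivAt (fun t : ℝ => v (z.1, Function.update z.2 I t)) u (z.2 I) :=
      hvz.comp_hasDerivAt _ hγ
    have hvcJ : ∀ J, HasDerivAt (fun t : ℝ => v (z.1, Function.update z.2 I t) J)
        (u J) (z.2 I) := hasDerivAt_pi.1 hvc
    have hpJ : ∀ J, HasDerivAt (fun t : ℝ => Function.update z.2 I t J)
        (Pi.single (M := fun _ : Fin n => ℝ) I 1 J) (z.2 I) := by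
      intro J
      by_cases h : J = I
      · subst h
        simp only [Pi.single_eq_same]
        simpa [Function.update_self] using hasDerivAt_id' (x := z.2 J)
      · simp only [Pi.single_eq_of_ne h]
        simpa [Function.update_of_ne h] using hasDerivAt_const (z.2 I) (z.2 J)
    have hsum : HasDerivAt (fun t : ℝ =>
        ∑ J, v (z.1, Function.update z.2 I t) J * Function.update z.2 I t J)
        (∑ J, (u J * z.2 J + v z J * Pi.single (M := fun _ : Fin n => ℝ) I 1 J)) (z.2 I) := by
      refine HasDerivAt.fun_sum fun J _ => ?_
      have := (hvcJ J).fun_mul (hpJ J)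
      simpa [Function.update_eq_self] using this
    have hδ : HasDerivAt (fun t : ℝ => ((v (z.1, Function.update z.2 I t), z.1) :
        (Fin n → ℝ) × (Fin n → ℝ))) ((u, 0)) (z.2 I) :=
      hvc.prodMk (hasDerivAt_const _ _)
    have hLz : HasFDerivAt L₀ DL (v (z.1, Function.update z.2 I (z.2 I)), z.1) := by
      rw [Function.update_eq_self]; exact (hL _).hasFDerivAt
    have hLc : HasDerivAt (fun t : ℝ => L₀ (v (z.1, Function.update z.2 I t), z.1))
        (DL (u, 0)) (z.2 I) := hLz.comp_hasDerivAt _ hδ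
    have htot := hsum.sub hLc
    have e2 : pd2 (fun z : (Fin n → ℝ) × (Fin n → ℝ) =>
          (∑ I, v z I * z.2 I) - L₀ (v z, z.1)) I z
        = (∑ J, (u J * z.2 J + v z J * Pi.single (M := fun _ : Fin n => ℝ) I 1 J)) - DL (u, 0) := htot.deriv
    rw [e2]
    have hC0 : ∀ a, fderiv ℝ (C a) (v z, z.1) (u, 0) = 0 := fun a =>
      hCkey a ((0 : Fin n → ℝ), Pi.single I 1)
    have hsingle : ∑ J, v z J * Pi.single (M := fun _ : Fin n => ℝ) I 1 J = v z I := by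
      simp [Pi.single_apply, mul_ite, Finset.sum_ite_eq]
    rw [Finset.sum_add_distrib, hkey u, hsingle]
    simp [hC0]
  · -- ∂H/∂q_I
    set u := fderiv ℝ v z (Pi.single I 1, (0 : Fin n → ℝ)) with hu
    have hγ : HasDerivAt (fun t : ℝ => ((Function.update z.1 I t, z.2) :
        (Fin n → ℝ) × (Fin n → ℝ))) ((Pi.single I 1, 0)) (z.1 I) :=
      (hasDerivAt_update z.1 I (z.1 I)).prodMk (hasDerivAt_const _ _)
    have hvz : HasFDerivAt v (fderiv ℝ v z) (Function.update z.1 I (z.1 I), z.2) := by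
      rw [Function.update_eq_self]; exact (hv z).hasFDerivAt
    have hvc : HasDerivAt (fun t : ℝ => v (Function.update z.1 I t, z.2)) u (z.1 I) :=
      hvz.comp_hasDerivAt _ hγ
    have hvcJ : ∀ J, HasDerivAt (fun t : ℝ => v (Function.update z.1 I t, z.2) J)
        (u J) (z.1 I) := hasDerivAt_pi.1 hvc
    have hsum : HasDerivAt (fun t : ℝ =>
        ∑ J, v (Function.update z.1 I t, z.2) J * z.2 J)
        (∑ J, u J * z.2 J) (z.1 I) := by
      refine HasDerivAt.fun_sum fun J _ => ?_
      simpa using (hvcJ J).mul_const (z.2 J)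
    have hδ : HasDerivAt (fun t : ℝ => ((v (Function.update z.1 I t, z.2),
        Function.update z.1 I t) : (Fin n → ℝ) × (Fin n → ℝ)))
        ((u, Pi.single I 1)) (z.1 I) :=
      hvc.prodMk (hasDerivAt_update z.1 I (z.1 I))
    have hLz : HasFDerivAt L₀ DL (v (Function.update z.1 I (z.1 I), z.2),
        Function.update z.1 I (z.1 I)) := by
      rw [Function.update_eq_self]; exact (hL _).hasFDerivAt
    have hLc : HasDerivAt (fun t : ℝ =>
        L₀ (v (Function.update z.1 I t, z.2), Function.update z.1 I t))
        (DL (u, Pi.single I 1)) (z.1 I) := hLz.comp_hasDerivAt _ hδ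
    have htot := hsum.sub hLc
    have e1 : pd1 (fun z : (Fin n → ℝ) × (Fin n → ℝ) =>
          (∑ I, v z I * z.2 I) - L₀ (v z, z.1)) I z
        = (∑ J, u J * z.2 J) - DL (u, Pi.single I 1) := htot.deriv
    rw [e1, hkey u]
    have hCa : ∀ a, fderiv ℝ (C a) (v z, z.1) (u, 0)
        = -(fderiv ℝ (C a) (v z, z.1) ((0 : Fin n → ℝ), Pi.single I 1)) := by
      intro a
      have h0 := hCkey a ((Pi.single I 1, (0 : Fin n → ℝ)))
      rw [← hu] at h0
      rw [clm_split] at h0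
      linarith
    have hLsplit : DL (u, Pi.single I 1) = DL (u, 0) + DL ((0 : Fin n → ℝ), Pi.single I 1) :=
      clm_split DL u (Pi.single I 1)
    rw [hLsplit, pd2_eq_fderiv L₀ hL]
    have : ∑ a, F z a * pd2 (C a) I (v z, z.1)
        = ∑ a, F z a * fderiv ℝ (C a) (v z, z.1) ((0 : Fin n → ℝ), Pi.single I 1) :=
      Finset.sum_congr rfl fun a _ => by rw [pd2_eq_fderiv (C a) (hC a)]
    rw [this]
    simp only [hCa, mul_neg, Finset.sum_neg_distrib]
    ring
end

section
/- Characterization of stationary points of the on-shell Hamiltonian: Assume L₀, each C a, and v are differentiable and the momentum identity and constraint identity hold at every point of ℝⁿ × ℝⁿ. Then the Fréchet derivative of the on-shell Hamiltonian H vanishes at (q,p) if and only if v(q,p) = 0 and, for every I, ∂₂ᴵL₀(v(q,p), q) + Σ_a F a (q,p) · ∂₂ᴵ(C a)(v(q,p), q) = 0. -/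
open scoped BigOperators

lemma myHasDerivAt_update {n : ℕ} (x : Fin n → ℝ) (I : Fin n) (t₀ : ℝ) :
    HasDerivAt (fun t => Function.update x I t) (Pi.single I 1) t₀ := by
  have h : (fun t => Function.update x I t) = fun t => x + (t - x I) • (Pi.single I 1 : Fin n → ℝ) := by
    funext t J
    rcases eq_or_ne J I with rfl | h
    · simp [Function.update_self]
    · simp [Function.update_of_ne h, Pi.single_eq_of_ne h]
  rw [h]
  have h1 : HasDerivAt (fun t : ℝ => t - x I) 1 t₀ := (hasDerivAt_id t₀).sub_const _
  simpa using (h1.smul_const (Pi.single I 1 : Fin n → ℝ)).const_add x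

lemma fderiv_pd1 {n : ℕ} (f : (Fin n → ℝ) × (Fin n → ℝ) → ℝ) (hf : Differentiable ℝ f)
    (x : (Fin n → ℝ) × (Fin n → ℝ)) (I : Fin n) :
    fderiv ℝ f x ((Pi.single I 1 : Fin n → ℝ), (0 : Fin n → ℝ)) = pd1 f I x := by
  have h1 : HasDerivAt (fun t => ((Function.update x.1 I t : Fin n → ℝ), x.2))
      ((Pi.single I 1 : Fin n → ℝ), (0 : Fin n → ℝ)) (x.1 I) :=
    (myHasDerivAt_update x.1 I (x.1 I)).prodMk (hasDerivAt_const _ _)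
  have h2 : HasFDerivAt f (fderiv ℝ f x) ((Function.update x.1 I (x.1 I) : Fin n → ℝ), x.2) := by
    rw [Function.update_eq_self]
    exact (hf x).hasFDerivAt
  have h3 := h2.comp_hasDerivAt (x.1 I) h1
  simpa [pd1, Function.comp_def] using h3.deriv.symm

lemma fderiv_pd2 {n : ℕ} (f : (Fin n → ℝ) × (Fin n → ℝ) → ℝ) (hf : Differentiable ℝ f)
    (x : (Fin n → ℝ) × (Fin n → ℝ)) (I : Fin n) :
    fderiv ℝ f x ((0 : Fin n → ℝ), (Pi.single I 1 : Fin n → ℝ)) = pd2 f I x := by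
  have h1 : HasDerivAt (fun t => (x.1, (Function.update x.2 I t : Fin n → ℝ)))
      ((0 : Fin n → ℝ), (Pi.single I 1 : Fin n → ℝ)) (x.2 I) :=
    (hasDerivAt_const _ _).prodMk (myHasDerivAt_update x.2 I (x.2 I))
  have h2 : HasFDerivAt f (fderiv ℝ f x) (x.1, (Function.update x.2 I (x.2 I) : Fin n → ℝ)) := by
    rw [Function.update_eq_self]
    exact (hf x).hasFDerivAt
  have h3 := h2.comp_hasDerivAt (x.2 I) h1
  simpa [pd2, Function.comp_def] using h3.deriv.symm

lemma fderiv_decomp {n : ℕ} (f : (Fin n → ℝ) × (Fin n → ℝ) → ℝ) (hf : Differentiable ℝ f)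
    (x w : (Fin n → ℝ) × (Fin n → ℝ)) :
    fderiv ℝ f x w = (∑ I, w.1 I * pd1 f I x) + ∑ I, w.2 I * pd2 f I x := by
  have hw : w = (∑ I, w.1 I • ((Pi.single I 1 : Fin n → ℝ), (0 : Fin n → ℝ)))
      + (∑ I, w.2 I • ((0 : Fin n → ℝ), (Pi.single I 1 : Fin n → ℝ))) := by
    refine Prod.ext ?_ ?_ <;>
      simp [Prod.fst_sum, Prod.snd_sum, ← Pi.single_smul, Finset.univ_sum_single]
  conv_lhs => rw [hw]
  rw [map_add, map_sum, map_sum]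
  simp only [map_smul, fderiv_pd1 f hf x, fderiv_pd2 f hf x, smul_eq_mul]

/-- Characterization of stationary points of the on-shell Hamiltonian. -/
theorem onshell_hamiltonian_stationary_iff
    {n m : ℕ}
    (L₀ : (Fin n → ℝ) × (Fin n → ℝ) → ℝ)
    (C : Fin m → ((Fin n → ℝ) × (Fin n → ℝ) → ℝ))
    (v : (Fin n → ℝ) × (Fin n → ℝ) → (Fin n → ℝ))
    (F : (Fin n → ℝ) × (Fin n → ℝ) → (Fin m → ℝ))
    (hL : Differentiable ℝ L₀)
    (hC : ∀ a, Differentiable ℝ (C a))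
    (hv : Differentiable ℝ v)
    (hmom : ∀ z : (Fin n → ℝ) × (Fin n → ℝ), ∀ I : Fin n,
      z.2 I = pd1 L₀ I (v z, z.1) + ∑ a, F z a * pd1 (C a) I (v z, z.1))
    (hcon : ∀ z : (Fin n → ℝ) × (Fin n → ℝ), ∀ a, C a (v z, z.1) = 0)
    (H : (Fin n → ℝ) × (Fin n → ℝ) → ℝ)
    (hH : ∀ z : (Fin n → ℝ) × (Fin n → ℝ), H z = (∑ I, v z I * z.2 I) - L₀ (v z, z.1)) :
    ∀ z : (Fin n → ℝ) × (Fin n → ℝ),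
      fderiv ℝ H z = 0 ↔
        (v z = 0 ∧ ∀ I : Fin n,
          pd2 L₀ I (v z, z.1) + ∑ a, F z a * pd2 (C a) I (v z, z.1) = 0) := by
  intro z
  set x : (Fin n → ℝ) × (Fin n → ℝ) := (v z, z.1) with hx
  set D := fderiv ℝ v z with hD
  set P : ((Fin n → ℝ) × (Fin n → ℝ)) →L[ℝ] ((Fin n → ℝ) × (Fin n → ℝ)) :=
    D.prod (ContinuousLinearMap.fst ℝ (Fin n → ℝ) (Fin n → ℝ)) with hP
  have hg : HasFDerivAt (fun z' : (Fin n → ℝ) × (Fin n → ℝ) => (v z', z'.1)) P z :=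
    (hv z).hasFDerivAt.prodMk (hasFDerivAt_fst)
  -- chain rule for L₀
  have hLc : HasFDerivAt (fun z' : (Fin n → ℝ) × (Fin n → ℝ) => L₀ (v z', z'.1))
      ((fderiv ℝ L₀ x).comp P) z := (hL x).hasFDerivAt.comp z hg
  -- constraint derivative vanishes
  have hCz : ∀ a, (fderiv ℝ (C a) x).comp P = 0 := by
    intro a
    have hcc : HasFDerivAt (fun z' : (Fin n → ℝ) × (Fin n → ℝ) => C a (v z', z'.1))
        ((fderiv ℝ (C a) x).comp P) z := (hC a x).hasFDerivAt.comp z hg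
    have heq : (fun z' : (Fin n → ℝ) × (Fin n → ℝ) => C a (v z', z'.1)) = fun _ => (0 : ℝ) :=
      funext fun z' => hcon z' a
    rw [heq] at hcc
    exact hcc.unique (hasFDerivAt_const 0 z)
  have hcw : ∀ a, ∀ w : (Fin n → ℝ) × (Fin n → ℝ),
      (∑ I, (D w) I * pd1 (C a) I x) = - ∑ I, w.1 I * pd2 (C a) I x := by
    intro a w
    have h0 : fderiv ℝ (C a) x (D w, w.1) = 0 := by
      have := congrFun (congrArg DFunLike.coe (hCz a)) w
      simpa [ContinuousLinearMap.comp_apply, hP] using this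
    rw [fderiv_decomp (C a) (hC a) x (D w, w.1)] at h0
    simp only at h0
    linarith
  -- derivative of the kinetic-pairing term
  have hmulI : ∀ I : Fin n, HasFDerivAt (fun z' : (Fin n → ℝ) × (Fin n → ℝ) => v z' I * z'.2 I)
      (v z I • ((ContinuousLinearMap.proj I).comp
          (ContinuousLinearMap.snd ℝ (Fin n → ℝ) (Fin n → ℝ)))
        + z.2 I • ((ContinuousLinearMap.proj I).comp D)) z := by
    intro I
    have h1 : HasFDerivAt (fun z' : (Fin n → ℝ) × (Fin n → ℝ) => v z' I)
        ((ContinuousLinearMap.proj I).comp D) z :=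
      (ContinuousLinearMap.proj I : (Fin n → ℝ) →L[ℝ] ℝ).hasFDerivAt.comp z (hv z).hasFDerivAt
    have h2 : HasFDerivAt (fun z' : (Fin n → ℝ) × (Fin n → ℝ) => z'.2 I)
        ((ContinuousLinearMap.proj I).comp (ContinuousLinearMap.snd ℝ (Fin n → ℝ) (Fin n → ℝ))) z :=
      (ContinuousLinearMap.proj I : (Fin n → ℝ) →L[ℝ] ℝ).hasFDerivAt.comp z hasFDerivAt_snd
    exact h1.mul h2
  have hSm : HasFDerivAt (fun z' : (Fin n → ℝ) × (Fin n → ℝ) => ∑ I, v z' I * z'.2 I)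
      (∑ I, (v z I • ((ContinuousLinearMap.proj I).comp
          (ContinuousLinearMap.snd ℝ (Fin n → ℝ) (Fin n → ℝ)))
        + z.2 I • ((ContinuousLinearMap.proj I).comp D))) z :=
    HasFDerivAt.fun_sum fun I _ => hmulI I
  have hHfun : H = fun z' : (Fin n → ℝ) × (Fin n → ℝ) =>
      (∑ I, v z' I * z'.2 I) - L₀ (v z', z'.1) := funext hH
  have hHd : HasFDerivAt H
      ((∑ I, (v z I • ((ContinuousLinearMap.proj I).comp
          (ContinuousLinearMap.snd ℝ (Fin n → ℝ) (Fin n → ℝ)))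
        + z.2 I • ((ContinuousLinearMap.proj I).comp D)))
        - (fderiv ℝ L₀ x).comp P) z := by
    rw [hHfun]; exact hSm.sub hLc
  have key : ∀ w : (Fin n → ℝ) × (Fin n → ℝ),
      fderiv ℝ H z w = (∑ I, v z I * w.2 I)
        - ∑ I, (pd2 L₀ I x + ∑ a, F z a * pd2 (C a) I x) * w.1 I := by
    intro w
    rw [hHd.fderiv]
    have hLw : fderiv ℝ L₀ x (D w, w.1)
        = (∑ I, (D w) I * pd1 L₀ I x) + ∑ I, w.1 I * pd2 L₀ I x :=
      fderiv_decomp L₀ hL x (D w, w.1)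
    simp only [ContinuousLinearMap.sub_apply, ContinuousLinearMap.sum_apply,
      ContinuousLinearMap.add_apply, ContinuousLinearMap.smul_apply,
      ContinuousLinearMap.comp_apply, ContinuousLinearMap.proj_apply,
      ContinuousLinearMap.coe_snd', hP, ContinuousLinearMap.prod_apply,
      ContinuousLinearMap.coe_fst', smul_eq_mul]
    rw [hLw]
    -- substitute the momentum identity
    have hsub : ∀ I : Fin n, z.2 I * (D w) I
        = pd1 L₀ I x * (D w) I + ∑ a, F z a * (pd1 (C a) I x * (D w) I) := by
      intro I
      rw [hmom z I]
      simp [add_mul, Finset.sum_mul, mul_assoc, hx]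
    have e1 : ∑ I, (v z I * w.2 I + z.2 I * (D w) I)
        = (∑ I, v z I * w.2 I) + (∑ I, pd1 L₀ I x * (D w) I)
          + ∑ a, F z a * ∑ I, pd1 (C a) I x * (D w) I := by
      simp only [Finset.sum_add_distrib, hsub]
      rw [Finset.sum_comm]
      simp [Finset.mul_sum, add_assoc]
    rw [e1]
    have e2 : ∀ a, F z a * ∑ I, pd1 (C a) I x * (D w) I
        = - (F z a * ∑ I, pd2 (C a) I x * w.1 I) := by
      intro a
      have := hcw a w
      simp only [mul_comm] at this ⊢
      rw [this]
      ring
    rw [Finset.sum_congr rfl fun a _ => e2 a]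
    have e3 : ∑ I, (pd2 L₀ I x + ∑ a, F z a * pd2 (C a) I x) * w.1 I
        = (∑ I, pd2 L₀ I x * w.1 I) + ∑ a, F z a * ∑ I, pd2 (C a) I x * w.1 I := by
      simp only [add_mul, Finset.sum_add_distrib, Finset.sum_mul]
      rw [Finset.sum_comm]
      simp [Finset.mul_sum, mul_assoc]
    rw [e3]
    have c1 : ∑ I, (D w) I * pd1 L₀ I x = ∑ I, pd1 L₀ I x * (D w) I := by
      simp [mul_comm]
    have c2 : ∑ I, w.1 I * pd2 L₀ I x = ∑ I, pd2 L₀ I x * w.1 I := by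
      simp [mul_comm]
    rw [c1, c2, Finset.sum_neg_distrib]
    ring
  constructor
  · intro h0
    have hav : ∀ w, fderiv ℝ H z w = 0 := by
      intro w; rw [h0]; rfl
    constructor
    · funext J
      have := hav ((0 : Fin n → ℝ), (Pi.single J 1 : Fin n → ℝ))
      rw [key] at this
      simpa [Pi.single_apply, Finset.sum_ite_eq', mul_comm] using this
    · intro J
      have := hav ((Pi.single J 1 : Fin n → ℝ), (0 : Fin n → ℝ))
      rw [key] at this
      simp [Pi.single_apply, Finset.sum_ite_eq', mul_comm] at this
      linarith
  · rintro ⟨hv0, hq0⟩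
    refine ContinuousLinearMap.ext fun w => ?_
    rw [key w, ContinuousLinearMap.zero_apply]
    simp [hv0, hq0]
end

section
/- Ostrogradsky-type Hamiltonian has no local extremum: Let g : ℝ × ℝᵐ → ℝ be twice continuously differentiable and define H : ℝ × ℝ × ℝᵐ → ℝ by H(π, p_φ, x) = π·p_φ + g(π, x). Then H has neither a local minimum nor a local maximum at any point of ℝ × ℝ × ℝᵐ, and H is unbounded above and unbounded below. -/
/-- The Ostrogradsky-type Hamiltonian `H(π, p_φ, x) = π·p_φ + g(π, x)` has no local
extremum anywhere and is unbounded above and below. -/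
theorem ostrogradsky_hamiltonian_pathology
    {m : ℕ} (g : ℝ × (Fin m → ℝ) → ℝ) (hg : ContDiff ℝ 2 g)
    (H : ℝ × ℝ × (Fin m → ℝ) → ℝ)
    (hH : ∀ z : ℝ × ℝ × (Fin m → ℝ), H z = z.1 * z.2.1 + g (z.1, z.2.2)) :
    (∀ z : ℝ × ℝ × (Fin m → ℝ), ¬ IsLocalMin H z ∧ ¬ IsLocalMax H z) ∧
    ¬ BddAbove (Set.range H) ∧ ¬ BddBelow (Set.range H) := by
  have key : ∀ z : ℝ × ℝ × (Fin m → ℝ), ∀ ε > (0:ℝ),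
      (∃ w, dist w z < ε ∧ H z < H w) ∧ (∃ w, dist w z < ε ∧ H w < H z) := by
    rintro ⟨π, p, x⟩ ε hε
    by_cases hπ : π = 0
    · subst hπ
      set f : ℝ → ℝ := fun t => g (t, x) with hf
      have hfd : DifferentiableAt ℝ f 0 := by
        have hgd : Differentiable ℝ g := hg.differentiable (by norm_num)
        exact (hgd.comp (Differentiable.prodMk differentiable_id (differentiable_const x))).differentiableAt
      set c : ℝ := deriv f 0 with hc
      set s : ℝ := if p + c = 0 then ε/4 else 0 with hs
      set a : ℝ := p + s + c with ha
      have ha0 : a ≠ 0 := by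
        by_cases h : p + c = 0
        · simp only [ha, hs, if_pos h]
          nlinarith
        · simp only [ha, hs, if_neg h]
          intro h'; exact h (by linarith)
      have hsε : |s| < ε := by
        by_cases h : p + c = 0 <;> simp only [hs, if_pos, if_neg, h, ite_true, ite_false] <;>
          rw [abs_of_nonneg (by positivity)] <;> linarith
      have hslope : Filter.Tendsto (slope f 0) (nhdsWithin 0 {0}ᶜ) (nhds c) :=
        hasDerivAt_iff_tendsto_slope.mp hfd.hasDerivAt
      have hmem : {t : ℝ | slope f 0 t ∈ Metric.ball c (|a|/2)} ∈ nhdsWithin (0:ℝ) {0}ᶜ :=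
        hslope (Metric.ball_mem_nhds c (by positivity))
      obtain ⟨δ, hδ, hδsub⟩ := Metric.mem_nhdsWithin_iff.mp hmem
      set t₀ : ℝ := min δ ε / 2 with ht₀
      have ht₀pos : 0 < t₀ := by positivity
      have ht₀δ : t₀ < δ := by simp only [ht₀]; have := min_le_left δ ε; linarith
      have ht₀ε : t₀ < ε := by simp only [ht₀]; have := min_le_right δ ε; linarith
      have main : ∀ t : ℝ, t ≠ 0 → |t| < δ →
          H (t, p + s, x) - H (0, p, x) = t * (a + (slope f 0 t - c)) ∧
          |slope f 0 t - c| < |a| / 2 := by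
        intro t ht htδ
        constructor
        · rw [hH, hH]
          simp only []
          have hslope_eq : f t - f 0 = t * slope f 0 t := by
            rw [slope_def_field]
            field_simp
            ring
          have : g (t, x) - g (0, x) = t * slope f 0 t := hslope_eq
          ring_nf
          nlinarith [this]
        · have : t ∈ Metric.ball (0:ℝ) δ ∩ {0}ᶜ := by
            constructor
            · simpa [Metric.mem_ball, Real.dist_eq] using htδ
            · exact ht
          have := hδsub this
          simpa [Metric.mem_ball, Real.dist_eq] using this
      have hdist : ∀ t : ℝ, |t| < ε →
          dist ((t, p + s, x) : ℝ × ℝ × (Fin m → ℝ)) (0, p, x) < ε := by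
        intro t htε
        rw [Prod.dist_eq, Prod.dist_eq]
        simp only [Real.dist_eq, dist_self]
        rw [sub_zero]
        have : |p + s - p| = |s| := by ring_nf
        apply max_lt htε (max_lt _ hε)
        simpa [this]
      have sign1 := main t₀ (ne_of_gt ht₀pos) (by rwa [abs_of_pos ht₀pos])
      have sign2 := main (-t₀) (by simp [ne_of_gt ht₀pos]) (by rwa [abs_neg, abs_of_pos ht₀pos])
      have b1pos : a > 0 → a + (slope f 0 t₀ - c) > 0 := by
        intro hap; have := sign1.2; rw [abs_of_pos hap] at this
        have := abs_lt.mp this; linarith [this.1]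
      have b1neg : a < 0 → a + (slope f 0 t₀ - c) < 0 := by
        intro hap; have := sign1.2; rw [abs_of_neg hap] at this
        have := abs_lt.mp this; linarith [this.2]
      have b2pos : a > 0 → a + (slope f 0 (-t₀) - c) > 0 := by
        intro hap; have := sign2.2; rw [abs_of_pos hap] at this
        have := abs_lt.mp this; linarith [this.1]
      have b2neg : a < 0 → a + (slope f 0 (-t₀) - c) < 0 := by
        intro hap; have := sign2.2; rw [abs_of_neg hap] at this
        have := abs_lt.mp this; linarith [this.2]
      rcases lt_or_gt_of_ne ha0 with haneg | hapos
      · exact ⟨⟨(-t₀, p + s, x), hdist _ (by rwa [abs_neg, abs_of_pos ht₀pos]),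
          by nlinarith [sign2.1, b2neg haneg]⟩,
          ⟨(t₀, p + s, x), hdist _ (by rwa [abs_of_pos ht₀pos]),
          by nlinarith [sign1.1, b1neg haneg]⟩⟩
      · exact ⟨⟨(t₀, p + s, x), hdist _ (by rwa [abs_of_pos ht₀pos]),
          by nlinarith [sign1.1, b1pos hapos]⟩,
          ⟨(-t₀, p + s, x), hdist _ (by rwa [abs_neg, abs_of_pos ht₀pos]),
          by nlinarith [sign2.1, b2pos hapos]⟩⟩
    · have hdist : ∀ d : ℝ, |d| < ε →
          dist ((π, p + d, x) : ℝ × ℝ × (Fin m → ℝ)) (π, p, x) < ε := by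
        intro d hd
        rw [Prod.dist_eq, Prod.dist_eq]
        simp only [Real.dist_eq, dist_self, sub_self, abs_zero]
        have : |p + d - p| = |d| := by ring_nf
        apply max_lt hε (max_lt _ hε)
        simpa [this]
      have hval : ∀ d : ℝ, H (π, p + d, x) - H (π, p, x) = π * d := by
        intro d; rw [hH, hH]; simp only []; ring
      rcases lt_or_gt_of_ne hπ with hneg | hpos
      · exact ⟨⟨(π, p + (-(ε/2)), x),
          hdist _ (by rw [abs_neg, abs_of_pos (by positivity)]; linarith),
          by nlinarith [hval (-(ε/2))]⟩,
          ⟨(π, p + ε/2, x), hdist _ (by rw [abs_of_pos (by positivity)]; linarith),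
          by nlinarith [hval (ε/2)]⟩⟩
      · exact ⟨⟨(π, p + ε/2, x), hdist _ (by rw [abs_of_pos (by positivity)]; linarith),
          by nlinarith [hval (ε/2)]⟩,
          ⟨(π, p + (-(ε/2)), x),
          hdist _ (by rw [abs_neg, abs_of_pos (by positivity)]; linarith),
          by nlinarith [hval (-(ε/2))]⟩⟩
  refine ⟨fun z => ⟨?_, ?_⟩, ?_, ?_⟩
  · intro hmin
    obtain ⟨ε, hε, hball⟩ := Metric.eventually_nhds_iff.mp hmin
    obtain ⟨w, hw, hlt⟩ := (key z ε hε).2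
    exact absurd (hball hw) (not_le.mpr hlt)
  · intro hmax
    obtain ⟨ε, hε, hball⟩ := Metric.eventually_nhds_iff.mp hmax
    obtain ⟨w, hw, hlt⟩ := (key z ε hε).1
    exact absurd (hball hw) (not_le.mpr hlt)
  · rintro ⟨B, hB⟩
    have h1 : H (1, B + 1 - g (1, (0 : Fin m → ℝ)), 0) ≤ B :=
      hB (Set.mem_range_self _)
    rw [hH] at h1
    simp only [] at h1
    linarith
  · rintro ⟨B, hB⟩
    have h1 : B ≤ H (1, B - 1 - g (1, (0 : Fin m → ℝ)), 0) :=
      hB (Set.mem_range_self _)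
    rw [hH] at h1
    simp only [] at h1
    linarith
end
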